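/- Let S be a semigroup that is the disjoint union of free monogenic subsemigroups ⟨a⟩, ⟨b⟩, ⟨c⟩, and suppose ab = ba = a^i, ac = ca = a^j, bc = cb = b^k for positive integers i, j, k. Then i + j = ik − k + 2. -/
import Mathlib


/-- `pw a n` is `a ^ n` for `n ≥ 1` (with junk value `a` at `n = 0`),
defined in any magma. -/
def pw {S : Type*} [Mul S] (a : S) : ℕ → S
  | 0 => a
  | 1 => a
  | n + 2 => pw a (n + 1) * a

/-- The monogenic subsemigroup `⟨a⟩ = {a^n : n ≥ 1}`. -/
def genSet {S : Type*} [Mul S] (a : S) : Set S := {x | ∃ n, 1 ≤ n ∧ pw a n = x}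

/-- `a` has infinite order: its positive powers are pairwise distinct,
i.e. `⟨a⟩` is free monogenic. -/
def InfOrder {S : Type*} [Mul S] (a : S) : Prop :=
  ∀ m n : ℕ, 1 ≤ m → 1 ≤ n → pw a m = pw a n → m = n

lemma pw_succ {S : Type*} [Mul S] (a : S) {n : ℕ} (hn : 1 ≤ n) :
    pw a (n + 1) = pw a n * a := by
  match n, hn with
  | n + 1, _ => rfl

lemma pw_add {S : Type*} [Semigroup S] (a : S) {m : ℕ} (hm : 1 ≤ m) :
    ∀ n, 1 ≤ n → pw a m * pw a n = pw a (m + n)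
  | 1, _ => by rw [pw_succ a hm]; rfl
  | n + 2, _ => by
    rw [pw_succ a (n := n + 1) (by omega), ← mul_assoc,
      pw_add a hm (n + 1) (by omega), ← pw_succ a (by omega : 1 ≤ m + (n + 1))]
    ring_nf

lemma pwa_mul_b {S : Type*} [Semigroup S] (a b : S) {i : ℕ} (hi : 1 ≤ i)
    (h1 : a * b = pw a i) :
    ∀ n, 1 ≤ n → pw a n * b = pw a (n + (i - 1))
  | 1, _ => by
    show a * b = _
    rw [h1]; congr 1; omega
  | n + 2, _ => by
    rw [pw_succ a (n := n + 1) (by omega), mul_assoc, h1,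
      pw_add a (by omega : 1 ≤ n + 1) i hi]
    congr 1; omega

lemma a_mul_pwb {S : Type*} [Semigroup S] (a b : S) {i : ℕ} (hi : 1 ≤ i)
    (h1 : a * b = pw a i) :
    ∀ m, 1 ≤ m → a * pw b m = pw a (m * (i - 1) + 1)
  | 1, _ => by
    show a * b = _
    rw [h1]; congr 1; omega
  | m + 2, _ => by
    rw [pw_succ b (n := m + 1) (by omega), ← mul_assoc,
      a_mul_pwb a b hi h1 (m + 1) (by omega),
      pwa_mul_b a b hi h1 _ (by omega)]
    congr 1; ring

theorem stmt_13 {S : Type*} [Semigroup S] (a b c : S)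
    (ha : InfOrder a) (hb : InfOrder b) (hc : InfOrder c)
    (hab : genSet a ∩ genSet b = ∅) (hac : genSet a ∩ genSet c = ∅)
    (hbc : genSet b ∩ genSet c = ∅)
    (hcover : genSet a ∪ genSet b ∪ genSet c = Set.univ)
    (i j k : ℕ) (hi : 1 ≤ i) (hj : 1 ≤ j) (hk : 1 ≤ k)
    (h1 : a * b = pw a i) (h2 : b * a = pw a i)
    (h3 : a * c = pw a j) (h4 : c * a = pw a j)
    (h5 : b * c = pw b k) (h6 : c * b = pw b k) :
    i + j = i * k - k + 2 := by
  have e1 : pw a (i + j) = pw a (k * (i - 1) + 2) := by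
    calc pw a (i + j) = pw a i * pw a j := (pw_add a hi j hj).symm
    _ = (a * b) * (c * a) := by rw [h1, h4]
    _ = (a * (b * c)) * a := by simp only [mul_assoc]
    _ = (a * pw b k) * a := by rw [h5]
    _ = pw a (k * (i - 1) + 1) * a := by rw [a_mul_pwb a b hi h1 k hk]
    _ = pw a (k * (i - 1) + 2) := (pw_succ a (by omega)).symm
  have := ha (i + j) (k * (i - 1) + 2) (by omega) (by omega) e1
  obtain ⟨i', rfl⟩ : ∃ i', i = i' + 1 := ⟨i - 1, by omega⟩
  have h' : (i' + 1) * k = i' * k + k := by ring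
  have h'' : k * (i' + 1 - 1) = i' * k := by rw [Nat.add_sub_cancel]; ring
  omega
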